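/- Let n be a positive integer not divisible by 3 and let Π be a (3,n)-Dyck path. Every cell x ∈ λ(Π) lying in the second column of the lattice satisfies arm(x)/(leg(x)+1) < 3/n < (arm(x)+1)/leg(x), and hence contributes to dinv(Π). -/

import Mathlib

open MvPolynomial

/-- An `(m,n)`-Dyck path: a north/east lattice path from `(0,0)` to `(m,n)` staying
weakly above the diagonal `y = (n/m)x`.  Such a path is encoded by recording, for each
of the `m` columns (indexed `0,…,m-1` from left to right), the number of cells of that
column lying above the path; this gives an antitone sequence, and the diagonal
condition for the east step in column `i` reads `m * c i ≤ n * (m - 1 - i)`. -/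
def DyckPath (m n : ℕ) : Type :=
  {c : Fin m → Fin (n + 1) //
    (∀ i j : Fin m, i ≤ j → (c j : ℕ) ≤ (c i : ℕ)) ∧
      ∀ i : Fin m, m * (c i : ℕ) ≤ n * (m - 1 - (i : ℕ))}

noncomputable instance instFintypeDyckPath (m n : ℕ) : Fintype (DyckPath m n) := by
  classical
  unfold DyckPath
  infer_instance

namespace DyckPath

variable {m n : ℕ}

/-- `λ(Π)`, the set of cells of the `m × n` lattice lying above the path `Π`.
The cell `(i, j)` (with `i : Fin m`, `j : Fin n`) is the cell in column `i + 1`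
(from the left) and row `j + 1` (from the bottom) in the paper's 1-based indexing. -/
def cellsAbove (P : DyckPath m n) : Set (Fin m × Fin n) :=
  {x | n - (P.1 x.1 : ℕ) ≤ (x.2 : ℕ)}

/-- `arm(x)`: the number of cells of `λ(Π)` strictly east of `x` (in the row of `x`). -/
noncomputable def arm (P : DyckPath m n) (x : Fin m × Fin n) : ℕ :=
  {y ∈ P.cellsAbove | x.1 < y.1 ∧ y.2 = x.2}.ncard

/-- `leg(x)`: the number of cells of `λ(Π)` strictly south of `x` (in the column of `x`). -/
noncomputable def leg (P : DyckPath m n) (x : Fin m × Fin n) : ℕ :=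
  {y ∈ P.cellsAbove | y.1 = x.1 ∧ y.2 < x.2}.ncard

end DyckPath

/-- The dinv condition `arm/(leg+1) < m/n < (arm+1)/leg` for a cell with given arm `a`
and leg `l`, the right inequality being interpreted as true when `l = 0`. -/
def dinvCond (m n a l : ℕ) : Prop :=
  (a : ℚ) / ((l : ℚ) + 1) < (m : ℚ) / (n : ℚ) ∧
    (l = 0 ∨ (m : ℚ) / (n : ℚ) < ((a : ℚ) + 1) / (l : ℚ))

namespace DyckPath

variable {m n : ℕ}

/-- `dinv(Π)`: the number of cells `x ∈ λ(Π)` with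
`arm(x)/(leg(x)+1) < m/n < (arm(x)+1)/leg(x)`. -/
noncomputable def dinv (P : DyckPath m n) : ℕ :=
  {x ∈ P.cellsAbove | dinvCond m n (P.arm x) (P.leg x)}.ncard

/-- `area(Π)`: the number of cells of the lattice lying entirely between the path and
the diagonal, i.e. cells lying entirely weakly above the diagonal `y = (n/m)x` and
below the path. -/
noncomputable def area (P : DyckPath m n) : ℕ :=
  {x : Fin m × Fin n | n * ((x.1 : ℕ) + 1) ≤ m * (x.2 : ℕ) ∧ x ∉ P.cellsAbove}.ncard

end DyckPath

/-- The `(m,n)`-rational `q,t`-Catalan polynomial `C_{m,n}(q,t)`, with `q = X 0` and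
`t = X 1`:  `C_{m,n}(q,t) = Σ_Π q^{dinv(Π)} t^{area(Π)}` over all `(m,n)`-Dyck paths. -/
noncomputable def ratCatalan (m n : ℕ) : MvPolynomial (Fin 2) ℤ :=
  ∑ P : DyckPath m n, X 0 ^ P.dinv * X 1 ^ P.area

/-- The rank of the cell `(i, j)` of the `3 × n` lattice: in the paper's 1-based
coordinates `(a, b) = (i+1, j+1)`, this is `R(a,b) = -a·n + 3(b-1)`. -/
def cellRank (n : ℕ) (x : Fin 3 × Fin n) : ℤ :=
  3 * (x.2 : ℤ) - ((x.1 : ℤ) + 1) * (n : ℤ)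

/-- The set of positive ranks of the `3 × n` lattice: these, in increasing order, are
the entries of the rank word. -/
def posRank (n : ℕ) : Set ℤ :=
  {r | 0 < r ∧ ∃ x : Fin 3 × Fin n, cellRank n x = r}

/-- The set of marked ranks of a `(3,n)`-Dyck path: the ranks of the cells above
the path. -/
def markedRank {n : ℕ} (P : DyckPath 3 n) : Set ℤ :=
  cellRank n '' P.cellsAbove

/-- `skips(Π)`: the number of skips of `Π`, i.e. of maximal blocks of consecutive
unmarked entries of the rank word of `Π` having at least one marked entry to the left
and at least one marked entry to the right.  Each such block is counted through its
rightmost entry `r`: `r` is an unmarked entry, some marked entry lies to its left, and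
the next entry of the rank word after `r` is marked. -/
noncomputable def DyckPath.skips {n : ℕ} (P : DyckPath 3 n) : ℕ :=
  {r : ℤ | r ∈ posRank n ∧ r ∉ markedRank P ∧
    (∃ l ∈ markedRank P, l < r) ∧
    ∃ s ∈ markedRank P, r < s ∧ ∀ t ∈ posRank n, r < t → s ≤ t}.ncard

theorem secondColumn_dinvCond (n : ℕ) (hn : 0 < n) (h3 : ¬ (3 ∣ n)) (P : DyckPath 3 n)
    (x : Fin 3 × Fin n) (hx : x ∈ P.cellsAbove) (hcol : x.1 = 1) :
    dinvCond 3 n (P.arm x) (P.leg x) := by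
  have hxlt : (x.2 : ℕ) < n := x.2.isLt
  have hc1n : (P.1 x.1 : ℕ) ≤ n := Nat.lt_succ_iff.mp (P.1 x.1).isLt
  have hxab : n - (P.1 x.1 : ℕ) ≤ (x.2 : ℕ) := hx
  have hd1 : 3 * (P.1 x.1 : ℕ) ≤ n := by
    have := P.2.2 x.1
    rw [hcol] at this ⊢
    simpa using this
  -- arm = 0
  have harm : P.arm x = 0 := by
    have hempty : {y ∈ P.cellsAbove | x.1 < y.1 ∧ y.2 = x.2} = (∅ : Set (Fin 3 × Fin n)) := by
      ext y
      simp only [Set.mem_setOf_eq, Set.mem_empty_iff_false, iff_false, not_and]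
      intro hy h1
      exfalso
      have hy1 : (y.1 : ℕ) = 2 := by
        have := y.1.isLt
        have h1' : (x.1 : ℕ) < (y.1 : ℕ) := h1
        rw [hcol] at h1'
        simp at h1'
        omega
      have hy2 : y.1 = (2 : Fin 3) := by
        apply Fin.ext; simpa using hy1
      have hc2 := P.2.2 y.1
      rw [hy2] at hc2
      simp at hc2
      have hmem : n - (P.1 y.1 : ℕ) ≤ (y.2 : ℕ) := hy
      rw [hy2] at hmem
      have := y.2.isLt
      have hc3 : 3 * (P.1 (2 : Fin 3) : ℕ) ≤ n * 0 := P.2.2 2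
      omega
    unfold DyckPath.arm
    rw [hempty, Set.ncard_empty]
  -- leg bound
  have hleg : P.leg x ≤ (x.2 : ℕ) - (n - (P.1 x.1 : ℕ)) := by
    have h1 : P.leg x ≤ (Set.Ico (n - (P.1 x.1 : ℕ)) (x.2 : ℕ)).ncard := by
      apply Set.ncard_le_ncard_of_injOn (fun y => (y.2 : ℕ))
      · rintro y ⟨hy, hy1, hy2⟩
        constructor
        · have : n - (P.1 y.1 : ℕ) ≤ (y.2 : ℕ) := hy
          rw [hy1] at this
          exact this
        · exact hy2
      · rintro y ⟨hy, hy1, hy2⟩ z ⟨hz, hz1, hz2⟩ hval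
        ext
        · rw [hy1, hz1]
        · exact hval
    have h2 : (Set.Ico (n - (P.1 x.1 : ℕ)) (x.2 : ℕ)).ncard
        = (x.2 : ℕ) - (n - (P.1 x.1 : ℕ)) := by
      rw [← Finset.coe_Ico, Set.ncard_coe_finset, Nat.card_Ico]
    omega
  have h3l : 3 * P.leg x < n := by omega
  constructor
  · rw [harm]
    push_cast
    rw [zero_div]
    apply div_pos
    · norm_num
    · exact_mod_cast hn
  · rcases Nat.eq_zero_or_pos (P.leg x) with h0 | hpos
    · exact Or.inl h0
    · right
      rw [harm, div_lt_div_iff₀ (by exact_mod_cast hn) (by exact_mod_cast hpos)]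
      push_cast
      have : (3 : ℚ) * (P.leg x : ℚ) < (n : ℚ) := by exact_mod_cast h3l
      linarith
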